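/- Let p and q be distinct primes and n ≥ 1 an integer such that the multiplicative order of q modulo p is exactly n (in particular n divides p − 1). Let ζ_p be a primitive p-th root of unity in an algebraic closure of ℚ. Then the element ξ_p := Σ_{i=0}^{n−1} ζ_p^{q^i} has degree (p − 1)/n over ℚ, i.e. [ℚ(ξ_p) : ℚ] = (p − 1)/n. -/

import Mathlib

noncomputable section

open Polynomial IntermediateField Module

theorem gauss_period_key
    (p q n : ℕ) (hp : p.Prime) (hn : 1 ≤ n)
    (hord : orderOf (q : ZMod p) = n)
    (L : Type) [Field L] [Algebra ℚ L]
    [IsCyclotomicExtension {p} ℚ L]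
    (ζ : L) (hζ : IsPrimitiveRoot ζ p) :
    (minpoly ℚ (∑ i ∈ Finset.range n, ζ ^ (q ^ i))).natDegree = (p - 1) / n := by
  classical
  have hnpos : 0 < n := hn
  set pn : ℕ := p with hpn
  haveI : NeZero p := ⟨hp.pos.ne'⟩
  haveI : FiniteDimensional ℚ L := IsCyclotomicExtension.finiteDimensional {pn} ℚ L
  haveI : IsGalois ℚ L := IsCyclotomicExtension.isGalois {pn} ℚ L
  have hζ' : IsPrimitiveRoot ζ (pn : ℕ) := hζ
  have hfr : finrank ℚ L = p - 1 := by
    rw [IsCyclotomicExtension.finrank (n := pn) L (Polynomial.cyclotomic.irreducible_rat hp.pos)]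
    exact Nat.totient_prime hp
  -- `q` as a unit of `ZMod p`
  have hq0 : (q : ZMod p) ^ n = 1 := by rw [← hord]; exact pow_orderOf_eq_one _
  have hqu : IsUnit (q : ZMod p) := by
    refine IsUnit.of_mul_eq_one ((q : ZMod p) ^ (n - 1)) ?_
    rw [← pow_succ', Nat.sub_add_cancel hn]
    exact hq0
  set qu : (ZMod p)ˣ := hqu.unit with hqu_def
  have hqu_coe : (qu : ZMod p) = (q : ZMod p) := hqu.unit_spec
  have horder : orderOf qu = n := by rw [← orderOf_units, hqu_coe, hord]
  -- the auxiliary functions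
  set g : ZMod p → L := fun x => ζ ^ x.val with hg
  have hgnat : ∀ m : ℕ, ζ ^ m = g ((m : ZMod p)) := by
    intro m
    have h1 : ζ ^ m = ζ ^ (m % p) := by
      conv_lhs => rw [← Nat.div_add_mod m p]
      rw [pow_add, pow_mul, hζ.pow_eq_one, one_pow, one_mul]
    rw [h1, hg]
    simp [ZMod.val_natCast]
  set u : (ZMod p)ˣ → L := fun x => g (x : ZMod p) with hu
  set S : (ZMod p)ˣ → Finset (ZMod p)ˣ :=
    fun a => (Finset.range n).image fun i => a * qu ^ i with hS
  have hSinj : ∀ a : (ZMod p)ˣ, ∀ i ∈ Finset.range n, ∀ j ∈ Finset.range n,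
      a * qu ^ i = a * qu ^ j → i = j := by
    intro a i hi j hj hij
    have := mul_left_cancel hij
    exact pow_injOn_Iio_orderOf (by simpa [horder] using Finset.mem_range.mp hi)
      (by simpa [horder] using Finset.mem_range.mp hj) this
  have hsumS : ∀ a : (ZMod p)ˣ, ∑ x ∈ S a, u x = ∑ i ∈ Finset.range n, u (a * qu ^ i) := by
    intro a
    exact Finset.sum_image (hSinj a)
  set ξ : L := ∑ i ∈ Finset.range n, ζ ^ (q ^ i) with hξ
  have hterm : ∀ (a : (ZMod p)ˣ) (i : ℕ), u (a * qu ^ i) = ζ ^ ((a : ZMod p).val * q ^ i) := by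
    intro a i
    rw [hgnat ((a : ZMod p).val * q ^ i), hu]
    congr 1
    push_cast
    rw [ZMod.natCast_val, ZMod.cast_id, hqu_coe]
  haveI : Fact (1 < p) := ⟨hp.one_lt⟩
  have hxi : ξ = ∑ i ∈ Finset.range n, u ((1 : (ZMod p)ˣ) * qu ^ i) := by
    rw [hξ]
    refine Finset.sum_congr rfl fun i _ => ?_
    rw [hterm]
    simp [ZMod.val_one]
  -- the Galois action on ξ
  have hsigma : ∀ σ : L ≃ₐ[ℚ] L,
      σ ξ = ∑ i ∈ Finset.range n, u ((hζ.autToPow ℚ σ) * qu ^ i) := by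
    intro σ
    rw [hξ, map_sum]
    refine Finset.sum_congr rfl fun i _ => ?_
    rw [hterm, map_pow, ← hζ.autToPow_spec ℚ σ, ← pow_mul]
  -- linear independence
  set B : PowerBasis ℚ L := IsPrimitiveRoot.powerBasis (n := pn) ℚ hζ' with hB
  have hdim : B.dim = p - 1 := by rw [← B.finrank, hfr]
  have hgen : B.gen = ζ := by rw [hB]; simp [IsPrimitiveRoot.powerBasis]
  have li0 : LinearIndependent ℚ (fun i : Fin B.dim => ζ ^ (i : ℕ)) := by
    have h := B.basis.linearIndependent
    rw [B.coe_basis] at h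
    rwa [hgen] at h
  have li1 : LinearIndependent ℚ (fun i : Fin B.dim => ζ ^ ((i : ℕ) + 1)) := by
    have hz : ζ ≠ 0 := hζ.ne_zero hp.pos.ne'
    have := li0.map' (LinearMap.mulLeft ℚ ζ)
      (LinearMap.ker_eq_bot.mpr (mul_right_injective₀ hz))
    simpa [Function.comp_def, pow_succ', LinearMap.mulLeft_apply] using this
  have hval : ∀ x : (ZMod p)ˣ, 1 ≤ ((x : ZMod p)).val := by
    intro x
    have h0 : ((x : ZMod p)) ≠ 0 := Units.ne_zero x
    have : ((x : ZMod p)).val ≠ 0 := fun h => h0 (by rwa [← ZMod.val_eq_zero])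
    omega
  have liu : LinearIndependent ℚ u := by
    set emb : (ZMod p)ˣ → Fin B.dim := fun x =>
      ⟨((x : ZMod p)).val - 1, by
        rw [hdim]
        have h1 := ZMod.val_lt (x : ZMod p)
        have h2 := hval x
        omega⟩ with hemb
    have hembinj : Function.Injective emb := by
      intro x y hxy
      have h1 : ((x : ZMod p)).val - 1 = ((y : ZMod p)).val - 1 := congrArg Fin.val hxy
      have h2 : ((x : ZMod p)).val = ((y : ZMod p)).val := by
        have := hval x; have := hval y; omega
      have h3 : ((x : ZMod p)) = ((y : ZMod p)) := ZMod.val_injective p h2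
      exact Units.ext h3
    have hcomp : (fun i : Fin B.dim => ζ ^ ((i : ℕ) + 1)) ∘ emb = u := by
      funext x
      simp only [Function.comp, hemb, hu, hg]
      congr 1
      have := hval x
      omega
    have := li1.comp emb hembinj
    rwa [hcomp] at this
  -- sums over distinct finsets of units are distinct
  have sum_inj : ∀ A B' : Finset (ZMod p)ˣ, ∑ x ∈ A, u x = ∑ x ∈ B', u x → A = B' := by
    intro A B' hAB
    have hinj := linearIndependent_iff_injective_finsuppLinearCombination.mp liu
    have e1 : (Finsupp.linearCombination ℚ u) (∑ x ∈ A, Finsupp.single x (1 : ℚ))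
        = ∑ x ∈ A, u x := by
      rw [map_sum]
      simp [Finsupp.linearCombination_single]
    have e2 : (Finsupp.linearCombination ℚ u) (∑ x ∈ B', Finsupp.single x (1 : ℚ))
        = ∑ x ∈ B', u x := by
      rw [map_sum]
      simp [Finsupp.linearCombination_single]
    have key := hinj (e1.trans (hAB.trans e2.symm))
    ext x
    have hx := DFunLike.congr_fun key x
    rw [Finset.sum_apply', Finset.sum_apply'] at hx
    simp only [Finsupp.single_apply, Finset.sum_ite_eq'] at hx
    by_cases hA : x ∈ A <;> by_cases hB : x ∈ B' <;> simp [hA, hB] at hx ⊢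
  -- the main equivalence
  have hmain : ∀ σ : L ≃ₐ[ℚ] L, σ ξ = ξ ↔ hζ.autToPow ℚ σ ∈ Subgroup.zpowers qu := by
    intro σ
    set a : (ZMod p)ˣ := hζ.autToPow ℚ σ with ha
    constructor
    · intro hfix
      have h1 : ∑ x ∈ S a, u x = ∑ x ∈ S 1, u x := by
        rw [hsumS, hsumS, ← hsigma σ, ← hxi, hfix]
      have h2 : S a = S 1 := sum_inj _ _ h1
      have h3 : a ∈ S a := by
        rw [hS]
        exact Finset.mem_image.mpr ⟨0, Finset.mem_range.mpr hnpos, by simp⟩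
      rw [h2, hS] at h3
      obtain ⟨i, _, hi⟩ := Finset.mem_image.mp h3
      exact ⟨(i : ℤ), by rw [← hi]; simp [zpow_natCast]⟩
    · intro hmem
      have hfin : IsOfFinOrder qu := by
        rw [← orderOf_pos_iff, horder]; exact hnpos
      obtain ⟨k, hk⟩ := (hfin.mem_powers_iff_mem_zpowers.mpr hmem)
      have hsub : S a ⊆ S 1 := by
        intro x hx
        rw [hS] at hx ⊢
        obtain ⟨i, _, hi⟩ := Finset.mem_image.mp hx
        refine Finset.mem_image.mpr ⟨(k + i) % n, Finset.mem_range.mpr (Nat.mod_lt _ hnpos), ?_⟩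
        rw [one_mul, ← horder, pow_mod_orderOf, ← hi, ← hk, ← pow_add]
      have hcard : (S 1).card ≤ (S a).card := by
        rw [hS]
        rw [Finset.card_image_of_injOn fun i hi j hj hij => hSinj 1 i hi j hj hij,
          Finset.card_image_of_injOn fun i hi j hj hij => hSinj a i hi j hj hij]
      have h2 : S a = S 1 := Finset.eq_of_subset_of_card_le hsub hcard
      rw [hsigma σ, ← ha, hxi, ← hsumS, ← hsumS, h2]
  -- the fixing subgroup
  set F : IntermediateField ℚ L := ℚ⟮ξ⟯ with hF
  have hfixiff : ∀ σ : L ≃ₐ[ℚ] L, σ ∈ F.fixingSubgroup ↔ σ ξ = ξ := by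
    intro σ
    constructor
    · intro h
      exact (IntermediateField.mem_fixingSubgroup_iff F σ).mp h ξ
        (IntermediateField.mem_adjoin_simple_self ℚ ξ)
    · intro h
      rw [IntermediateField.mem_fixingSubgroup_iff]
      intro x hx
      induction hx using IntermediateField.adjoin_induction with
      | mem y hy => rw [Set.mem_singleton_iff] at hy; rw [hy]; exact h
      | algebraMap y => exact σ.commutes y
      | add y z _ _ hy hz => rw [map_add, hy, hz]
      | inv y _ hy => rw [map_inv₀, hy]
      | mul y z _ _ hy hz => rw [map_mul, hy, hz]
  -- the Galois group is isomorphic to (ZMod p)ˣ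
  have hbij : Function.Bijective (hζ.autToPow ℚ) := by
    rw [Fintype.bijective_iff_injective_and_card]
    refine ⟨IsPrimitiveRoot.autToPow_injective (K := ℚ) (n := pn) hζ', ?_⟩
    rw [← Nat.card_eq_fintype_card, IsGalois.card_aut_eq_finrank, hfr, ZMod.card_units_eq_totient, Nat.totient_prime hp]
  set e : (L ≃ₐ[ℚ] L) ≃* (ZMod p)ˣ := MulEquiv.ofBijective _ hbij with he
  have hee : ∀ σ, e σ = hζ.autToPow ℚ σ := fun _ => rfl
  set τ : L ≃ₐ[ℚ] L := e.symm qu with hτ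
  have hfix : F.fixingSubgroup = Subgroup.zpowers τ := by
    ext σ
    rw [hfixiff σ, hmain σ]
    constructor
    · rintro ⟨m, hm⟩
      refine ⟨m, ?_⟩
      apply e.injective
      rw [map_zpow, hτ, MulEquiv.apply_symm_apply, hee]
      exact hm
    · rintro ⟨m, hm⟩
      refine ⟨m, ?_⟩
      rw [← hee, ← hm, map_zpow, hτ, MulEquiv.apply_symm_apply]
  have h1 : finrank F L = n := by
    calc finrank F L = Fintype.card F.fixingSubgroup := by
          rw [← Nat.card_eq_fintype_card]; exact (IsGalois.card_fixingSubgroup_eq_finrank F).symm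
      _ = Nat.card F.fixingSubgroup := Nat.card_eq_fintype_card.symm
      _ = Nat.card (Subgroup.zpowers τ) := by rw [hfix]
      _ = orderOf τ := Nat.card_zpowers _
      _ = orderOf qu := by
          rw [hτ, ← orderOf_injective e.symm.toMonoidHom e.symm.injective qu]
          rfl
      _ = n := horder
  have hint : IsIntegral ℚ ξ := IsIntegral.of_finite ℚ ξ
  have h2 : finrank ℚ F = (minpoly ℚ ξ).natDegree := IntermediateField.adjoin.finrank hint
  have h3 : finrank ℚ F * finrank F L = finrank ℚ L := finrank_mul_finrank ℚ F L
  rw [h1, hfr] at h3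
  rw [← h2]
  exact (Nat.div_eq_of_eq_mul_left hnpos h3.symm).symm

theorem gauss_period_degree
    (p q n : ℕ) (hp : p.Prime) (hq : q.Prime) (hpq : p ≠ q) (hn : 1 ≤ n)
    (hord : orderOf (q : ZMod p) = n)
    (ζ : AlgebraicClosure ℚ) (hζ : IsPrimitiveRoot ζ p) :
    (minpoly ℚ (∑ i ∈ Finset.range n, ζ ^ (q ^ i))).natDegree = (p - 1) / n := by
  classical
  haveI : NeZero p := ⟨hp.pos.ne'⟩
  set pn : ℕ := p with hpn
  haveI : NeZero pn := ⟨hp.pos.ne'⟩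
  set L : Type := CyclotomicField pn ℚ with hL
  haveI : IsCyclotomicExtension {pn} ℚ L := by
    have h : @IsCyclotomicExtension {pn} ℚ (CyclotomicField pn ℚ) _ _
        (CyclotomicField.algebra pn ℚ) := inferInstance
    convert h; exact Subsingleton.elim _ _
  haveI : FiniteDimensional ℚ L := IsCyclotomicExtension.finiteDimensional {pn} ℚ L
  haveI : Algebra.IsAlgebraic ℚ L := Algebra.IsAlgebraic.of_finite ℚ L
  set f : L →ₐ[ℚ] AlgebraicClosure ℚ := IsAlgClosed.lift with hf
  have hfinj : Function.Injective f := f.toRingHom.injective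
  set ζ₀ : L := IsCyclotomicExtension.zeta pn ℚ L with hζ₀
  have h₀ : IsPrimitiveRoot ζ₀ p := IsCyclotomicExtension.zeta_spec pn ℚ L
  have hfζ₀ : IsPrimitiveRoot (f ζ₀) p := h₀.map_of_injective hfinj
  obtain ⟨i, _, hi⟩ := hfζ₀.eq_pow_of_pow_eq_one hζ.pow_eq_one
  set ζ' : L := ζ₀ ^ i with hζ'd
  have hfζ' : f ζ' = ζ := by rw [hζ'd, map_pow, hi]
  have hζ' : IsPrimitiveRoot ζ' p := by
    apply IsPrimitiveRoot.of_map_of_injective (f := f.toRingHom) _ hfinj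
    rw [AlgHom.toRingHom_eq_coe]
    show IsPrimitiveRoot (f ζ') p
    rw [hfζ']
    exact hζ
  have hsum : (∑ j ∈ Finset.range n, ζ ^ (q ^ j))
      = f (∑ j ∈ Finset.range n, ζ' ^ (q ^ j)) := by
    rw [map_sum]
    refine Finset.sum_congr rfl fun j _ => ?_
    rw [map_pow, hfζ']
  rw [hsum, minpoly.algHom_eq f hfinj]
  exact gauss_period_key p q n hp hn hord L ζ' hζ'
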